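/- Let g : (0,1] → ℝ be nonnegative and continuous with ∫₀¹ g(x)² dx < ∞, let α ≥ 1, and let f̂(x) = α·x^(α−1)·∫_x^1 y^(−α)·g(y) dy. If ∫₀¹ f̂(x)² dx < ∞, then ∫₀¹ f̂(x)² dx = (2α/(2α−1)) · ∫₀¹ f̂(x)·g(x) dx. -/

import Mathlib

open MeasureTheory Real Set
open Filter intervalIntegral Topology

/-- For nonnegative continuous `g` on `(0,1]` with `∫₀¹ g² < ∞`, `α ≥ 1`,
and `f̂(x) = α x^(α-1) ∫_x^1 y^(-α) g(y) dy`, if `∫₀¹ f̂² < ∞` then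
`∫₀¹ f̂² = (2α/(2α-1)) ∫₀¹ f̂ g`. -/
theorem alphaL_square_cross_identity
    (g : ℝ → ℝ) (α : ℝ) (hα : 1 ≤ α)
    (hg_nonneg : ∀ x ∈ Set.Ioc (0 : ℝ) 1, 0 ≤ g x)
    (hg_cont : ContinuousOn g (Set.Ioc (0 : ℝ) 1))
    (hg_sq : IntegrableOn (fun x => (g x) ^ 2) (Set.Ioc (0 : ℝ) 1))
    (fhat : ℝ → ℝ)
    (hfhat : ∀ x ∈ Set.Ioc (0 : ℝ) 1,
      fhat x = α * x ^ (α - 1) * ∫ y in x..1, y ^ (-α) * g y)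
    (hfhat_sq : IntegrableOn (fun x => (fhat x) ^ 2) (Set.Ioc (0 : ℝ) 1)) :
    ∫ x in Set.Ioc (0 : ℝ) 1, (fhat x) ^ 2
      = (2 * α / (2 * α - 1)) * ∫ x in Set.Ioc (0 : ℝ) 1, fhat x * g x := by
  have hα0 : (0:ℝ) < α := by linarith
  have h2α1 : (0:ℝ) < 2 * α - 1 := by linarith
  set h : ℝ → ℝ := fun y => y ^ (-α) * g y with hh
  set F : ℝ → ℝ := fun x => ∫ y in x..1, h y with hFdef
  -- continuity of h
  have hcont_h : ContinuousOn h (Set.Ioc (0:ℝ) 1) := by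
    apply ContinuousOn.mul _ hg_cont
    exact fun x hx => (Real.continuousAt_rpow_const x (-α) (Or.inl (ne_of_gt hx.1))).continuousWithinAt
  -- interval integrability of h on [a,b] ⊆ (0,1]
  have hint : ∀ a b : ℝ, 0 < a → a ≤ b → b ≤ 1 → IntervalIntegrable h volume a b := by
    intro a b ha hab hb1
    refine ContinuousOn.intervalIntegrable ?_
    refine hcont_h.mono ?_
    rw [Set.uIcc_of_le hab]
    intro x hx; exact ⟨lt_of_lt_of_le ha hx.1, le_trans hx.2 hb1⟩
  -- F nonneg and monotone facts
  have hF_nonneg : ∀ x : ℝ, 0 < x → x ≤ 1 → 0 ≤ F x := by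
    intro x hx hx1
    refine intervalIntegral.integral_nonneg hx1 ?_
    intro y hy
    exact mul_nonneg (Real.rpow_nonneg (le_trans hx.le hy.1) _)
      (hg_nonneg y ⟨lt_of_lt_of_le hx hy.1, hy.2⟩)
  have hF_mono : ∀ x ε : ℝ, 0 < x → x ≤ ε → ε ≤ 1 → F ε ≤ F x := by
    intro x ε hx hxε hε1
    have h1 : F x = (∫ y in x..ε, h y) + F ε := by
      rw [hFdef]
      exact (intervalIntegral.integral_add_adjacent_intervals
        (hint x ε hx hxε hε1) (hint ε 1 (hx.trans_le hxε) hε1 le_rfl)).symm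
    have h2 : 0 ≤ ∫ y in x..ε, h y := by
      refine intervalIntegral.integral_nonneg hxε ?_
      intro y hy
      exact mul_nonneg (Real.rpow_nonneg (le_trans hx.le hy.1) _)
        (hg_nonneg y ⟨lt_of_lt_of_le hx hy.1, le_trans hy.2 hε1⟩)
    linarith
  -- continuity of F on [ε,1]
  have hF_cont : ∀ ε : ℝ, 0 < ε → ε ≤ 1 → ContinuousOn F (Set.Icc ε 1) := by
    intro ε hε hε1
    have hi : IntegrableOn h (Set.uIcc ε 1) volume := by
      rw [Set.uIcc_of_le hε1]
      exact (hcont_h.mono (fun x hx => ⟨lt_of_lt_of_le hε hx.1, hx.2⟩)).integrableOn_Icc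
    have := intervalIntegral.continuousOn_primitive_interval_left hi
    rwa [Set.uIcc_of_le hε1] at this
  -- derivative of F
  have hF_deriv : ∀ x : ℝ, x ∈ Set.Ioo (0:ℝ) 1 → HasDerivAt F (-(h x)) x := by
    intro x hx
    have hca : ∀ y ∈ Set.Ioo (0:ℝ) 1, ContinuousAt h y := fun y hy =>
      hcont_h.continuousAt (Filter.mem_of_superset (isOpen_Ioo.mem_nhds hy) Set.Ioo_subset_Ioc_self)
    exact intervalIntegral.integral_hasDerivAt_left (hint x 1 hx.1 hx.2.le le_rfl)
      (ContinuousAt.stronglyMeasurableAtFilter isOpen_Ioo hca x hx) (hca x hx)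
  set G : ℝ → ℝ := fun x => x ^ (2*α - 1) * (F x)^2 with hGdef
  -- the FTC identity on [ε, 1]
  have key : ∀ ε : ℝ, 0 < ε → ε ≤ 1 →
      (2*α-1) * (∫ x in ε..1, x ^ (2*α-2) * (F x)^2)
        - 2 * (∫ x in ε..1, x ^ (α-1) * g x * F x)
        = -(ε ^ (2*α-1) * (F ε)^2) := by
    intro ε hε hε1
    have hsub : Set.Icc ε 1 ⊆ Set.Ioc (0:ℝ) 1 := fun x hx => ⟨lt_of_lt_of_le hε hx.1, hx.2⟩
    have hFc := hF_cont ε hε hε1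
    have hrpow_cont : ∀ r : ℝ, ContinuousOn (fun x : ℝ => x ^ r) (Set.Icc ε 1) :=
      fun r => continuousOn_id.rpow_const (fun x hx => Or.inl (ne_of_gt (lt_of_lt_of_le hε hx.1)))
    have hp_cont : ContinuousOn (fun x => x ^ (2*α-2) * (F x)^2) (Set.Icc ε 1) :=
      (hrpow_cont _).mul (hFc.pow 2)
    have hq_cont : ContinuousOn (fun x => x ^ (α-1) * g x * F x) (Set.Icc ε 1) :=
      ((hrpow_cont _).mul (hg_cont.mono hsub)).mul hFc
    have hp_int : IntervalIntegrable (fun x => x ^ (2*α-2) * (F x)^2) volume ε 1 :=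
      ContinuousOn.intervalIntegrable (by rwa [Set.uIcc_of_le hε1])
    have hq_int : IntervalIntegrable (fun x => x ^ (α-1) * g x * F x) volume ε 1 :=
      ContinuousOn.intervalIntegrable (by rwa [Set.uIcc_of_le hε1])
    have hG' : ∀ x ∈ Set.Ioo ε 1, HasDerivAt G
        ((2*α-1) * (x ^ (2*α-2) * (F x)^2) - 2 * (x ^ (α-1) * g x * F x)) x := by
      intro x hx
      have hx0 : 0 < x := lt_trans hε hx.1
      have hd1 : HasDerivAt (fun x : ℝ => x ^ (2*α-1)) ((2*α-1) * x ^ (2*α-1-1)) x :=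
        Real.hasDerivAt_rpow_const (Or.inl hx0.ne')
      have hd2 : HasDerivAt (fun x => (F x)^2) ((2:ℕ) * (F x)^1 * (-(h x))) x :=
        (hF_deriv x ⟨hx0, hx.2⟩).pow 2
      have hmul := hd1.mul hd2
      have hxpow : x ^ (2*α-1) * x ^ (-α) = x ^ (α-1) := by
        rw [← Real.rpow_add hx0]; ring_nf
      have he : (2*α-1-1) = 2*α-2 := by ring
      rw [he] at hmul
      refine hmul.congr_deriv ?_
      simp only [hh]
      push_cast
      linear_combination (-2) * g x * F x * hxpow
    have hG_cont : ContinuousOn G (Set.Icc ε 1) := (hrpow_cont _).mul (hFc.pow 2)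
    have hG'_int : IntervalIntegrable (fun x =>
        (2*α-1) * (x ^ (2*α-2) * (F x)^2) - 2 * (x ^ (α-1) * g x * F x)) volume ε 1 :=
      (hp_int.const_mul _).sub (hq_int.const_mul _)
    have hftc := intervalIntegral.integral_eq_sub_of_hasDerivAt_of_le hε1 hG_cont hG' hG'_int
    rw [intervalIntegral.integral_sub (hp_int.const_mul _) (hq_int.const_mul _),
        intervalIntegral.integral_const_mul, intervalIntegral.integral_const_mul] at hftc
    have hF1 : F 1 = 0 := intervalIntegral.integral_same
    rw [hftc, hGdef]
    simp [hF1]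
  -- translate into fhat
  have key2 : ∀ ε : ℝ, 0 < ε → ε ≤ 1 →
      (2*α-1) * (∫ x in Set.Ioc ε 1, (fhat x)^2)
        - 2*α * (∫ x in Set.Ioc ε 1, fhat x * g x)
        = -(α^2 * (ε ^ (2*α-1) * (F ε)^2)) := by
    intro ε hε hε1
    have hsub : Set.Ioc ε 1 ⊆ Set.Ioc (0:ℝ) 1 := Set.Ioc_subset_Ioc hε.le le_rfl
    have hA : ∫ x in Set.Ioc ε 1, (fhat x)^2
        = α^2 * ∫ x in ε..1, x ^ (2*α-2) * (F x)^2 := by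
      rw [intervalIntegral.integral_of_le hε1, ← MeasureTheory.integral_const_mul]
      refine MeasureTheory.setIntegral_congr_fun measurableSet_Ioc ?_
      intro x hx
      have hx0 : 0 < x := lt_trans hε hx.1
      have hsq : (x ^ (α-1))^2 = x ^ (2*α-2) := by
        rw [← Real.rpow_natCast (x ^ (α-1)) 2, ← Real.rpow_mul hx0.le]
        norm_num
        ring_nf
      have hfx : fhat x = α * x ^ (α-1) * F x := hfhat x (hsub hx)
      show fhat x ^ 2 = α^2 * (x ^ (2*α-2) * F x ^ 2)
      rw [hfx, mul_pow, mul_pow, hsq]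
      ring
    have hB : ∫ x in Set.Ioc ε 1, fhat x * g x
        = α * ∫ x in ε..1, x ^ (α-1) * g x * F x := by
      rw [intervalIntegral.integral_of_le hε1, ← MeasureTheory.integral_const_mul]
      refine MeasureTheory.setIntegral_congr_fun measurableSet_Ioc ?_
      intro x hx
      have hfx : fhat x = α * x ^ (α-1) * F x := hfhat x (hsub hx)
      show fhat x * g x = α * (x ^ (α-1) * g x * F x)
      rw [hfx]; ring
    rw [hA, hB]
    linear_combination α^2 * key ε hε hε1
  -- continuity of F on (0,1]
  have hF_contIoc : ContinuousOn F (Set.Ioc (0:ℝ) 1) := by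
    intro x hx
    have h2 : 0 < x/2 := by linarith [hx.1]
    have hmem : Set.Icc (x/2) 1 ∈ nhdsWithin x (Set.Ioc (0:ℝ) 1) := by
      refine Filter.mem_of_superset
        (inter_mem_nhdsWithin _ (Ioi_mem_nhds (by linarith [hx.1] : x/2 < x))) ?_
      intro y hy
      exact ⟨le_of_lt hy.2, hy.1.2⟩
    exact ((hF_cont (x/2) h2 (by linarith [hx.2])) x ⟨by linarith [hx.1], hx.2⟩).mono_of_mem_nhdsWithin hmem
  have hphi_cont : ContinuousOn (fun x => α * x ^ (α-1) * F x) (Set.Ioc (0:ℝ) 1) :=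
    (continuousOn_const.mul (continuousOn_id.rpow_const
      fun x hx => Or.inl (ne_of_gt hx.1))).mul hF_contIoc
  have hfhat_ae : fhat =ᵐ[volume.restrict (Set.Ioc (0:ℝ) 1)]
      (fun x => α * x ^ (α-1) * F x) := by
    filter_upwards [ae_restrict_mem measurableSet_Ioc] with x hx
    exact hfhat x hx
  have hfhat_meas : AEStronglyMeasurable fhat (volume.restrict (Set.Ioc (0:ℝ) 1)) :=
    ((hphi_cont.aestronglyMeasurable measurableSet_Ioc)).congr hfhat_ae.symm
  have hg_meas : AEStronglyMeasurable g (volume.restrict (Set.Ioc (0:ℝ) 1)) :=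
    hg_cont.aestronglyMeasurable measurableSet_Ioc
  have hfg_int : IntegrableOn (fun x => fhat x * g x) (Set.Ioc (0:ℝ) 1) := by
    refine Integrable.mono' ((hfhat_sq.add hg_sq).div_const 2) (hfhat_meas.mul hg_meas) ?_
    refine Filter.Eventually.of_forall (fun x => ?_)
    simp only [Pi.add_apply]
    rw [Real.norm_eq_abs, abs_mul]
    nlinarith [sq_nonneg (|fhat x| - |g x|), sq_abs (fhat x), sq_abs (g x),
      abs_nonneg (fhat x), abs_nonneg (g x)]
  -- monotone family of sets
  set s : ℕ → Set ℝ := fun n => Set.Ioc (1/(n+1:ℝ)) 1 with hsdef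
  have hε_pos : ∀ n : ℕ, 0 < 1/(n+1:ℝ) := fun n => by positivity
  have hε_le : ∀ n : ℕ, 1/(n+1:ℝ) ≤ 1 := fun n => by
    rw [div_le_one (by positivity)]
    linarith [Nat.cast_nonneg (α := ℝ) n]
  have hs_mono : Monotone s := by
    intro n m hnm
    apply Set.Ioc_subset_Ioc_left
    apply one_div_le_one_div_of_le (by positivity)
    have : (n:ℝ) ≤ m := Nat.cast_le.mpr hnm
    linarith
  have hs_union : ⋃ n, s n = Set.Ioc (0:ℝ) 1 := by
    ext x
    simp only [hsdef, Set.mem_iUnion, Set.mem_Ioc]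
    constructor
    · rintro ⟨n, hn, h1⟩
      exact ⟨lt_trans (hε_pos n) hn, h1⟩
    · rintro ⟨hx0, hx1⟩
      obtain ⟨n, hn⟩ := exists_nat_one_div_lt hx0
      exact ⟨n, hn, hx1⟩
  have hA_t : Tendsto (fun n => ∫ x in s n, (fhat x)^2) atTop
      (𝓝 (∫ x in Set.Ioc (0:ℝ) 1, (fhat x)^2)) := by
    have := MeasureTheory.tendsto_setIntegral_of_monotone
      (fun i => measurableSet_Ioc) hs_mono (hs_union ▸ hfhat_sq)
    rwa [hs_union] at this
  have hB_t : Tendsto (fun n => ∫ x in s n, fhat x * g x) atTop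
      (𝓝 (∫ x in Set.Ioc (0:ℝ) 1, fhat x * g x)) := by
    have := MeasureTheory.tendsto_setIntegral_of_monotone
      (fun i => measurableSet_Ioc) hs_mono (hs_union ▸ hfg_int)
    rwa [hs_union] at this
  -- bound on the boundary term
  have hbound : ∀ ε : ℝ, 0 < ε → ε ≤ 1 →
      α^2 * (ε ^ (2*α-1) * (F ε)^2) ≤ (2*α-1) * ∫ x in Set.Ioc 0 ε, (fhat x)^2 := by
    intro ε hε hε1
    have hsub : Set.Ioc (0:ℝ) ε ⊆ Set.Ioc (0:ℝ) 1 := Set.Ioc_subset_Ioc le_rfl hε1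
    have hint1 : IntegrableOn (fun x => (fhat x)^2) (Set.Ioc (0:ℝ) ε) := hfhat_sq.mono_set hsub
    have hint2 : IntegrableOn (fun x => (α^2 * (F ε)^2) * x ^ (2*α-2)) (Set.Ioc (0:ℝ) ε) :=
      ((intervalIntegral.intervalIntegrable_rpow' (a := 0) (b := ε)
        (show (-1:ℝ) < 2*α-2 by linarith)).1).const_mul _
    have hle : ∫ x in Set.Ioc 0 ε, (α^2 * (F ε)^2) * x ^ (2*α-2)
        ≤ ∫ x in Set.Ioc 0 ε, (fhat x)^2 := by
      refine MeasureTheory.setIntegral_mono_on hint2 hint1 measurableSet_Ioc ?_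
      intro x hx
      have hx0 : 0 < x := hx.1
      have hsq : (x ^ (α-1))^2 = x ^ (2*α-2) := by
        rw [← Real.rpow_natCast (x ^ (α-1)) 2, ← Real.rpow_mul hx0.le]
        norm_num
        ring_nf
      show α^2 * (F ε)^2 * x ^ (2*α-2) ≤ fhat x ^ 2
      have hfx : fhat x = α * x ^ (α-1) * F x := hfhat x (hsub hx)
      rw [hfx, mul_pow, mul_pow, hsq]
      have hFF : (F ε)^2 ≤ (F x)^2 :=
        pow_le_pow_left₀ (hF_nonneg ε hε hε1) (hF_mono x ε hx0 hx.2 hε1) 2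
      have hxp : (0:ℝ) ≤ x ^ (2*α-2) := Real.rpow_nonneg hx0.le _
      nlinarith [mul_le_mul_of_nonneg_left hFF (mul_nonneg (sq_nonneg α) hxp)]
    have hcomp : ∫ x in Set.Ioc 0 ε, (α^2 * (F ε)^2) * x ^ (2*α-2)
        = α^2 * (F ε)^2 * (ε ^ (2*α-1) / (2*α-1)) := by
      rw [← intervalIntegral.integral_of_le hε.le, intervalIntegral.integral_const_mul,
          integral_rpow (Or.inl (by linarith))]
      rw [Real.zero_rpow (by linarith : 2*α-2+1 ≠ 0)]
      have he : (2*α-2+1) = 2*α-1 := by ring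
      rw [he]
      ring
    rw [hcomp] at hle
    have h1 : α^2 * (ε ^ (2*α-1) * (F ε)^2)
        = (2*α-1) * (α^2 * (F ε)^2 * (ε ^ (2*α-1) / (2*α-1))) := by
      rw [mul_div_assoc', mul_div_assoc', mul_div_cancel_left₀ _ (ne_of_gt h2α1)]
      ring
    rw [h1]
    exact mul_le_mul_of_nonneg_left hle h2α1.le
  -- boundary term tends to zero
  have hT : Tendsto (fun n : ℕ => ∫ x in Set.Ioc (0:ℝ) (1/(n+1:ℝ)), (fhat x)^2) atTop (𝓝 0) := by
    have hsplit : ∀ n : ℕ, (∫ x in Set.Ioc (0:ℝ) (1/(n+1:ℝ)), (fhat x)^2)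
        = (∫ x in Set.Ioc (0:ℝ) 1, (fhat x)^2) - ∫ x in s n, (fhat x)^2 := by
      intro n
      have hdis : Disjoint (Set.Ioc (0:ℝ) (1/(n+1:ℝ))) (s n) := Set.Ioc_disjoint_Ioc_of_le le_rfl
      have hun : Set.Ioc (0:ℝ) (1/(n+1:ℝ)) ∪ s n = Set.Ioc (0:ℝ) 1 :=
        Set.Ioc_union_Ioc_eq_Ioc (hε_pos n).le (hε_le n)
      have hu := MeasureTheory.setIntegral_union hdis measurableSet_Ioc
        (hfhat_sq.mono_set (fun x hx => ⟨hx.1, le_trans hx.2 (hε_le n)⟩))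
        (hfhat_sq.mono_set (fun x hx => ⟨lt_trans (hε_pos n) hx.1, hx.2⟩))
      rw [hun] at hu
      linarith [hu]
    simp only [hsplit]
    have := (tendsto_const_nhds
      (x := ∫ x in Set.Ioc (0:ℝ) 1, (fhat x)^2) (f := (atTop : Filter ℕ))).sub hA_t
    simpa using this
  have hGb : Tendsto (fun n : ℕ => α^2 * ((1/(n+1:ℝ)) ^ (2*α-1) * (F (1/(n+1:ℝ)))^2))
      atTop (𝓝 0) := by
    refine squeeze_zero (fun n : ℕ => ?_) (fun n : ℕ => hbound _ (hε_pos n) (hε_le n)) ?_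
    · have := hF_nonneg _ (hε_pos n) (hε_le n)
      positivity
    · simpa using hT.const_mul (2*α-1)
  -- pass to the limit
  have hLHS : Tendsto (fun n => (2*α-1) * (∫ x in s n, (fhat x)^2)
      - 2*α*(∫ x in s n, fhat x * g x)) atTop
      (𝓝 ((2*α-1) * (∫ x in Set.Ioc (0:ℝ) 1, (fhat x)^2)
        - 2*α*(∫ x in Set.Ioc (0:ℝ) 1, fhat x * g x))) :=
    (hA_t.const_mul _).sub (hB_t.const_mul _)
  have heqn : ∀ n : ℕ, (2*α-1) * (∫ x in s n, (fhat x)^2)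
      - 2*α*(∫ x in s n, fhat x * g x)
      = -(α^2 * ((1/(n+1:ℝ)) ^ (2*α-1) * (F (1/(n+1:ℝ)))^2)) :=
    fun n => key2 _ (hε_pos n) (hε_le n)
  have h0 : Tendsto (fun n => (2*α-1) * (∫ x in s n, (fhat x)^2)
      - 2*α*(∫ x in s n, fhat x * g x)) atTop (𝓝 0) := by
    simp only [heqn]
    simpa using hGb.neg
  have hfinal : (2*α-1) * (∫ x in Set.Ioc (0:ℝ) 1, (fhat x)^2)
      - 2*α*(∫ x in Set.Ioc (0:ℝ) 1, fhat x * g x) = 0 :=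
    tendsto_nhds_unique hLHS h0
  have hne : (2*α-1) ≠ 0 := ne_of_gt h2α1
  field_simp
  linear_combination hfinal
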